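/- Let n ≥ 3 and Γ̃ = {z ∈ ℂ^{n+1} : Re z_1 > 0 and Re z_{n+1} = (Re z_1)(Re z_2) + (Re z_1) Σ_{j=3}^n (Re z_j)²}. For t ∈ ℝ and z ∈ Γ̃, set D = e^{−it} z_1 + e^{−it} − z_1 + 1. Then D ≠ 0, and the point φ_t(z) with coordinates φ_t(z)_1 = (e^{−it} z_1 + e^{−it} + z_1 − 1)/D, φ_t(z)_2 = −(−e^{−it} z_1 z_2 + 2 e^{−it} z_{n+1} − e^{−it} z_2 + z_1 z_2 − 2 z_{n+1} − z_2)/D, φ_t(z)_j = z_j for 3 ≤ j ≤ n, and φ_t(z)_{n+1} = 4 e^{−it} z_{n+1}/D², again lies in Γ̃. Moreover φ_t fixes the point p₀ = (1, 0, …, 0). -/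

import Mathlib

/-- The tube hypersurface `Γ̃ = {z ∈ ℂ^{n+1} : Re z₁ > 0,
Re z_{n+1} = (Re z₁)(Re z₂) + (Re z₁) Σ_{j=3}^n (Re z_j)²}` (0-indexed coordinates). -/
def tubeGamma (n : ℕ) (hn : 3 ≤ n) : Set (Fin (n + 1) → ℂ) :=
  {z | 0 < (z 0).re ∧ (z (Fin.last n)).re = (z 0).re * (z ⟨1, by omega⟩).re +
    (z 0).re * ∑ j : Fin (n + 1), (if 2 ≤ (j : ℕ) ∧ (j : ℕ) < n then (z j).re ^ 2 else 0)}

/-- The denominator `D = e^{−it} z₁ + e^{−it} − z₁ + 1`. -/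
noncomputable def Dden (t : ℝ) (z1 : ℂ) : ℂ :=
  Complex.exp (-Complex.I * t) * z1 + Complex.exp (-Complex.I * t) - z1 + 1

/-- The map `φ_t` with coordinates
`φ_t(z)₁ = (e^{−it} z₁ + e^{−it} + z₁ − 1)/D`,
`φ_t(z)₂ = −(−e^{−it} z₁ z₂ + 2 e^{−it} z_{n+1} − e^{−it} z₂ + z₁ z₂ − 2 z_{n+1} − z₂)/D`,
`φ_t(z)_j = z_j` for `3 ≤ j ≤ n`, and `φ_t(z)_{n+1} = 4 e^{−it} z_{n+1}/D²`. -/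
noncomputable def phiT (n : ℕ) (t : ℝ) (z : Fin (n + 1) → ℂ) : Fin (n + 1) → ℂ := fun i =>
  if (i : ℕ) = 0 then
    (Complex.exp (-Complex.I * t) * z 0 + Complex.exp (-Complex.I * t) + z 0 - 1) /
      Dden t (z 0)
  else if (i : ℕ) = 1 then
    -(-(Complex.exp (-Complex.I * t)) * z 0 * z i
        + 2 * Complex.exp (-Complex.I * t) * z (Fin.last n)
        - Complex.exp (-Complex.I * t) * z i
        + z 0 * z i - 2 * z (Fin.last n) - z i) / Dden t (z 0)
  else if (i : ℕ) = n then
    4 * Complex.exp (-Complex.I * t) * z i / (Dden t (z 0)) ^ 2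
  else z i

lemma keyIdent (er ei a b p q u v S : ℝ) (hcs : er * er + ei * ei = 1)
    (hrel : u = a * p + a * S) :
    (-4)*ei*v + (-8)*ei*b*u + 4*ei*b^2*v + 8*ei*a*v + 8*ei*a*b*u + (-4)*ei*a^2*v + 8*ei^2*u + 8*ei^2*b^2*u + (-16)*ei^2*a*b*v + (-8)*ei^2*a^2*u + 4*ei^3*v + (-8)*ei^3*b*u + (-4)*ei^3*b^2*v + 8*ei^3*a*v + (-8)*ei^3*a*b*u + 4*ei^3*a^2*v + 4*er*u + (-8)*er*b*v + (-4)*er*b^2*u + (-8)*er*a*u + 8*er*a*b*v + 4*er*a^2*u + 4*er*ei^2*u + 8*er*ei^2*b*v + (-4)*er*ei^2*b^2*u + 8*er*ei^2*a*u + 8*er*ei^2*a*b*v + 4*er*ei^2*a^2*u + 8*er^2*u + 8*er^2*b^2*u + (-16)*er^2*a*b*v + (-8)*er^2*a^2*u + 4*er^2*ei*v + (-8)*er^2*ei*b*u + (-4)*er^2*ei*b^2*v + 8*er^2*ei*a*v + (-8)*er^2*ei*a*b*u + 4*er^2*ei*a^2*v + 4*er^3*u + 8*er^3*b*v + (-4)*er^3*b^2*u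 + 8*er^3*a*u + 8*er^3*a*b*v + 4*er^3*a^2*u =
    4 * a * (2*u + 1*p + (-2)*b*v + 1*b^2*p + (-2)*a*u + (-2)*a*p + 1*a^2*p + 4*ei*v + (-4)*ei*b*p + (-2)*ei^2*u + 1*ei^2*p + (-2)*ei^2*b*v + 1*ei^2*b^2*p + (-2)*ei^2*a*u + 2*ei^2*a*p + 1*ei^2*a^2*p + 2*er*p + 4*er*b*v + (-2)*er*b^2*p + 4*er*a*u + (-2)*er*a^2*p + (-2)*er^2*u + 1*er^2*p + (-2)*er^2*b*v + 1*er^2*b^2*p + (-2)*er^2*a*u + 2*er^2*a*p + 1*er^2*a^2*p) + 4 * a * S * (1 + 1*b^2 + (-2)*a + 1*a^2 + (-4)*ei*b + 1*ei^2 + 1*ei^2*b^2 + 2*ei^2*a + 1*ei^2*a^2 + 2*er + (-2)*er*b^2 + (-2)*er*a^2 + 1*er^2 + 1*er^2*b^2 + 2*er^2*a + 1*er^2*a^2) := by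
  linear_combination (4*u + 4*b^2*u + (-8)*a*b*v + (-4)*a^2*u + 4*ei*v + (-8)*ei*b*u + (-4)*ei*b^2*v + 8*ei*a*v + (-8)*ei*a*b*u + 4*ei*a^2*v + 4*er*u + 8*er*b*v + (-4)*er*b^2*u + 8*er*a*u + 8*er*a*b*v + 4*er*a^2*u) * hcs + (4 * (1 + 1*b^2 + (-2)*a + 1*a^2 + (-4)*ei*b + 1*ei^2 + 1*ei^2*b^2 + 2*ei^2*a + 1*ei^2*a^2 + 2*er + (-2)*er*b^2 + (-2)*er*a^2 + 1*er^2 + 1*er^2*b^2 + 2*er^2*a + 1*er^2*a^2)) * hrel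

/-- For each `t ∈ ℝ`: for every `z ∈ Γ̃` the denominator `D` is nonzero and `φ_t(z) ∈ Γ̃`;
moreover `φ_t` fixes the point `p₀ = (1, 0, …, 0)`. -/
theorem phiT_maps_tubeGamma (n : ℕ) (hn : 3 ≤ n) (t : ℝ) :
    (∀ z ∈ tubeGamma n hn, Dden t (z 0) ≠ 0 ∧ phiT n t z ∈ tubeGamma n hn) ∧
    phiT n t (fun i => if (i : ℕ) = 0 then 1 else 0) =
      (fun i : Fin (n + 1) => if (i : ℕ) = 0 then (1 : ℂ) else 0) := by
  set e := Complex.exp (-Complex.I * ↑t) with he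
  have hnsq : Complex.normSq e = 1 := by
    have h : e * (starRingEnd ℂ) e = 1 := by
      rw [he, ← Complex.exp_conj, ← Complex.exp_add]
      simp
    rw [Complex.mul_conj] at h
    exact_mod_cast h
  have hcs : e.re * e.re + e.im * e.im = 1 := by
    rw [← Complex.normSq_apply, hnsq]
  constructor
  · intro z hz
    obtain ⟨ha, hrel⟩ := hz
    have hD : Dden t (z 0) ≠ 0 := by
      intro h
      have h2 : e * (z 0 + 1) = z 0 - 1 := by rw [Dden] at h; linear_combination h
      have h3 := congrArg Complex.normSq h2
      rw [map_mul, hnsq, one_mul] at h3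
      simp only [Complex.normSq_apply, Complex.add_re, Complex.add_im, Complex.sub_re,
        Complex.sub_im, Complex.one_re, Complex.one_im] at h3
      nlinarith [ha, h3]
    have hQ : Complex.normSq (Dden t (z 0)) ≠ 0 := by
      simpa using hD
    have hQpos : 0 < Complex.normSq (Dden t (z 0)) := Complex.normSq_pos.mpr hD
    have hzero : phiT n t z 0 = (e * z 0 + e + z 0 - 1) / Dden t (z 0) := by
      simp only [phiT, ← he, Fin.val_zero]
      norm_num
    have hA : ((e * z 0 + e + z 0 - 1) / Dden t (z 0)).re
        = 4 * (z 0).re / Complex.normSq (Dden t (z 0)) := by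
      rw [Complex.div_re, ← add_div]
      congr 1
      simp only [Dden, ← he, Complex.add_re, Complex.add_im, Complex.sub_re, Complex.sub_im,
        Complex.mul_re, Complex.mul_im, Complex.one_re, Complex.one_im]
      linear_combination (1 + (z 0).im^2 + 2*(z 0).re + (z 0).re^2) * hcs
    refine ⟨hD, ?_, ?_⟩
    · rw [hzero, hA]
      exact div_pos (by linarith) hQpos
    · have hone : phiT n t z ⟨1, by omega⟩
          = -(-e * z 0 * z ⟨1, by omega⟩ + 2 * e * z (Fin.last n) - e * z ⟨1, by omega⟩
            + z 0 * z ⟨1, by omega⟩ - 2 * z (Fin.last n) - z ⟨1, by omega⟩) / Dden t (z 0) := by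
        simp only [phiT, ← he]
        norm_num
      have hlast : phiT n t z (Fin.last n)
          = 4 * e * z (Fin.last n) / (Dden t (z 0)) ^ 2 := by
        simp only [phiT, Fin.val_last, ← he]
        rw [if_neg (by omega), if_neg (by omega)]
        simp
      have hsum : ∑ j : Fin (n + 1),
            (if 2 ≤ (j : ℕ) ∧ (j : ℕ) < n then (phiT n t z j).re ^ 2 else 0)
          = ∑ j : Fin (n + 1), (if 2 ≤ (j : ℕ) ∧ (j : ℕ) < n then (z j).re ^ 2 else 0) := by
        refine Finset.sum_congr rfl fun j _ => ?_
        by_cases hj : 2 ≤ (j : ℕ) ∧ (j : ℕ) < n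
        · rw [if_pos hj, if_pos hj]
          have : phiT n t z j = z j := by
            simp only [phiT]
            rw [if_neg (by omega), if_neg (by omega), if_neg (by omega)]
          rw [this]
        · rw [if_neg hj, if_neg hj]
      show (phiT n t z (Fin.last n)).re = _
      rw [hzero, hone, hlast, hsum]
      set S := ∑ j : Fin (n + 1), (if 2 ≤ (j : ℕ) ∧ (j : ℕ) < n then (z j).re ^ 2 else 0)
        with hS
      set a := (z 0).re
      set b := (z 0).im
      set p := (z ⟨1, by omega⟩ : ℂ).re
      set q := (z ⟨1, by omega⟩ : ℂ).im
      set u := (z (Fin.last n)).re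
      set v := (z (Fin.last n)).im
      set er := e.re
      set ei := e.im
      have hB : (-(-e * z 0 * z ⟨1, by omega⟩ + 2 * e * z (Fin.last n) - e * z ⟨1, by omega⟩
            + z 0 * z ⟨1, by omega⟩ - 2 * z (Fin.last n) - z ⟨1, by omega⟩) / Dden t (z 0)).re
          = (2*u + 1*p + (-2)*b*v + 1*b^2*p + (-2)*a*u + (-2)*a*p + 1*a^2*p + 4*ei*v + (-4)*ei*b*p + (-2)*ei^2*u + 1*ei^2*p + (-2)*ei^2*b*v + 1*ei^2*b^2*p + (-2)*ei^2*a*u + 2*ei^2*a*p + 1*ei^2*a^2*p + 2*er*p + 4*er*b*v + (-2)*er*b^2*p + 4*er*a*u + (-2)*er*a^2*p + (-2)*er^2*u + 1*er^2*p + (-2)*er^2*b*v + 1*er^2*b^2*p + (-2)*er^2*a*u + 2*er^2*a*p + 1*er^2*a^2*p) / Complex.normSq (Dden t (z 0)) := by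
        rw [Complex.div_re, ← add_div]
        congr 1
        simp only [Dden, ← he, Complex.add_re, Complex.add_im, Complex.sub_re, Complex.sub_im,
          Complex.mul_re, Complex.mul_im, Complex.one_re, Complex.one_im, Complex.neg_re,
          Complex.neg_im, Complex.re_ofNat, Complex.im_ofNat]
        ring
      have hC : ((4 * e * z (Fin.last n)) / (Dden t (z 0)) ^ 2).re
          = ((-4)*ei*v + (-8)*ei*b*u + 4*ei*b^2*v + 8*ei*a*v + 8*ei*a*b*u + (-4)*ei*a^2*v + 8*ei^2*u + 8*ei^2*b^2*u + (-16)*ei^2*a*b*v + (-8)*ei^2*a^2*u + 4*ei^3*v + (-8)*ei^3*b*u + (-4)*ei^3*b^2*v + 8*ei^3*a*v + (-8)*ei^3*a*b*u + 4*ei^3*a^2*v + 4*er*u + (-8)*er*b*v + (-4)*er*b^2*u + (-8)*er*a*u + 8*er*a*b*v + 4*er*a^2*u + 4*er*ei^2*u + 8*er*ei^2*b*v + (-4)*er*ei^2*b^2*u + 8*er*ei^2*a*u + 8*er*ei^2*a*b*v + 4*er*ei^2*a^2*u + 8*er^2*u + 8*er^2*b^2*u + (-16)*er^2*a*b*v +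 (-8)*er^2*a^2*u + 4*er^2*ei*v + (-8)*er^2*ei*b*u + (-4)*er^2*ei*b^2*v + 8*er^2*ei*a*v + (-8)*er^2*ei*a*b*u + 4*er^2*ei*a^2*v + 4*er^3*u + 8*er^3*b*v + (-4)*er^3*b^2*u + 8*er^3*a*u + 8*er^3*a*b*v + 4*er^3*a^2*u)
            / (Complex.normSq (Dden t (z 0)) * Complex.normSq (Dden t (z 0))) := by
        rw [pow_two, Complex.div_re, ← add_div, map_mul]
        congr 1
        simp only [Dden, ← he, Complex.add_re, Complex.add_im, Complex.sub_re, Complex.sub_im,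
          Complex.mul_re, Complex.mul_im, Complex.one_re, Complex.one_im, Complex.neg_re,
          Complex.neg_im, Complex.re_ofNat, Complex.im_ofNat]
        ring
      have hQexp : Complex.normSq (Dden t (z 0)) = 1 + 1*b^2 + (-2)*a + 1*a^2 + (-4)*ei*b + 1*ei^2 + 1*ei^2*b^2 + 2*ei^2*a + 1*ei^2*a^2 + 2*er + (-2)*er*b^2 + (-2)*er*a^2 + 1*er^2 + 1*er^2*b^2 + 2*er^2*a + 1*er^2*a^2 := by
        simp only [Dden, ← he, Complex.normSq_apply, Complex.add_re, Complex.add_im,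
          Complex.sub_re, Complex.sub_im, Complex.mul_re, Complex.mul_im, Complex.one_re,
          Complex.one_im]
        ring
      have hk := keyIdent er ei a b p q u v S hcs hrel
      rw [hA, hB, hC]
      have hkey : ((-4)*ei*v + (-8)*ei*b*u + 4*ei*b^2*v + 8*ei*a*v + 8*ei*a*b*u + (-4)*ei*a^2*v + 8*ei^2*u + 8*ei^2*b^2*u + (-16)*ei^2*a*b*v + (-8)*ei^2*a^2*u + 4*ei^3*v + (-8)*ei^3*b*u + (-4)*ei^3*b^2*v + 8*ei^3*a*v + (-8)*ei^3*a*b*u + 4*ei^3*a^2*v + 4*er*u + (-8)*er*b*v + (-4)*er*b^2*u + (-8)*er*a*u + 8*er*a*b*v + 4*er*a^2*u + 4*er*ei^2*u + 8*er*ei^2*b*v + (-4)*er*ei^2*b^2*u + 8*er*ei^2*a*u + 8*er*ei^2*a*b*v + 4*er*ei^2*a^2*u + 8*er^2*u + 8*er^2*b^2*u + (-16)*er^2*a*b*v + (-8)*er^2*a^2*u + 4*er^2*ei*v + (-8)*er^2*ei*b*u + (-4)*er^2*ei*b^2*v + 8*er^2*ei*a*v + (-8)*er^2*ei*a*b*u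 + 4*er^2*ei*a^2*v + 4*er^3*u + 8*er^3*b*v + (-4)*er^3*b^2*u + 8*er^3*a*u + 8*er^3*a*b*v + 4*er^3*a^2*u)
          = 4 * a * (2*u + 1*p + (-2)*b*v + 1*b^2*p + (-2)*a*u + (-2)*a*p + 1*a^2*p + 4*ei*v + (-4)*ei*b*p + (-2)*ei^2*u + 1*ei^2*p + (-2)*ei^2*b*v + 1*ei^2*b^2*p + (-2)*ei^2*a*u + 2*ei^2*a*p + 1*ei^2*a^2*p + 2*er*p + 4*er*b*v + (-2)*er*b^2*p + 4*er*a*u + (-2)*er*a^2*p + (-2)*er^2*u + 1*er^2*p + (-2)*er^2*b*v + 1*er^2*b^2*p + (-2)*er^2*a*u + 2*er^2*a*p + 1*er^2*a^2*p) + 4 * a * S * Complex.normSq (Dden t (z 0)) := by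
        rw [hQexp]; exact hk
      rw [hkey]
      field_simp
  · funext i
    have hz0 : (fun i : Fin (n + 1) => if (i : ℕ) = 0 then (1 : ℂ) else 0) 0 = 1 := by simp
    have hzL : (fun i : Fin (n + 1) => if (i : ℕ) = 0 then (1 : ℂ) else 0) (Fin.last n) = 0 := by
      simp only [Fin.val_last]
      rw [if_neg (by omega)]
    have h2e : Dden t 1 ≠ 0 := by
      intro h
      apply Complex.exp_ne_zero (-Complex.I * t)
      rw [Dden] at h
      linear_combination h / 2
    simp only [phiT, hz0, hzL, ← he]
    by_cases h0 : (i : ℕ) = 0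
    · rw [if_pos h0, if_pos h0]
      rw [div_eq_one_iff_eq h2e, Dden]
      ring
    · rw [if_neg h0, if_neg h0]
      by_cases h1 : (i : ℕ) = 1
      · rw [if_pos h1]
        norm_num
      · rw [if_neg h1]
        by_cases h2 : (i : ℕ) = n
        · rw [if_pos h2]
          norm_num
        · rw [if_neg h2]
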